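/- For every n ≥ 3, the cycle C_n on n vertices satisfies th_⌊Z⌋(C_n) = ⌈2√n − 1⌉. -/

import Mathlib

open SimpleGraph

namespace ZFT

variable {V : Type*} {α : Type*} {β : Type*}

/-! ### Standard zero forcing (simultaneous propagation) -/

/-- One round of simultaneous standard zero forcing: a blue vertex forces its
unique white neighbor. -/
def zStep (G : SimpleGraph V) (S : Set V) : Set V :=
  S ∪ {w | ∃ u ∈ S, G.Adj u w ∧ ∀ x, G.Adj u x → x ∉ S → x = w}

/-- `B` is a standard zero forcing set of `G`. -/
def IsZeroForcingSet (G : SimpleGraph V) (B : Set V) : Prop :=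
  ∃ t : ℕ, (zStep G)^[t] B = Set.univ

/-- The standard propagation time `pt_Z(G;B)` (`⊤` if `B` is not a zero forcing set). -/
noncomputable def ptZ (G : SimpleGraph V) (B : Set V) : ℕ∞ :=
  sInf {n : ℕ∞ | ∃ t : ℕ, n = t ∧ (zStep G)^[t] B = Set.univ}

/-- The standard throttling number `th_Z(G;B) = |B| + pt_Z(G;B)`. -/
noncomputable def thZ (G : SimpleGraph V) (B : Set V) : ℕ∞ :=
  (B.ncard : ℕ∞) + ptZ G B

/-- The standard throttling number `th_Z(G)`. -/
noncomputable def thZgraph (G : SimpleGraph V) : ℕ∞ :=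
  sInf {n : ℕ∞ | ∃ B : Set V, IsZeroForcingSet G B ∧ n = thZ G B}

/-- The standard zero forcing number `Z(G)`. -/
noncomputable def Znum (G : SimpleGraph V) : ℕ :=
  sInf {k : ℕ | ∃ B : Set V, IsZeroForcingSet G B ∧ B.ncard = k}

/-- The standard propagation time `pt_Z(G)`, minimized over minimum zero forcing sets. -/
noncomputable def ptZgraph (G : SimpleGraph V) : ℕ∞ :=
  sInf {n : ℕ∞ | ∃ B : Set V, IsZeroForcingSet G B ∧ B.ncard = Znum G ∧ n = ptZ G B}

/-! ### Sets of standard forces -/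

/-- Validity of a single standard force `u → w` when `blue` is the blue set. -/
def zForceValid (G : SimpleGraph V) (blue : Set V) (u w : V) : Prop :=
  u ∈ blue ∧ w ∉ blue ∧ G.Adj u w ∧ ∀ x, G.Adj u x → x ∉ blue → x = w

/-- Validity of a chronological list of standard forces starting from a blue set. -/
def zValidList (G : SimpleGraph V) : Set V → List (V × V) → Prop
  | _, [] => True
  | blue, p :: L => zForceValid G blue p.1 p.2 ∧ zValidList G (insert p.2 blue) L

/-- The blue set after performing all forces in a list, starting from `B`. -/
def endBlue (B : Set V) (L : List (V × V)) : Set V :=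
  B ∪ {w | ∃ u, (u, w) ∈ L}

/-- The set of vertices that have performed a force in a list. -/
def endForced (L : List (V × V)) : Set V := {u | ∃ w, (u, w) ∈ L}

/-- `F` is a set of standard forces of `B` in `G` (recorded from a maximal
chronological list of forces). -/
def IsZForceSet (G : SimpleGraph V) (B : Set V) (F : Set (V × V)) : Prop :=
  ∃ L : List (V × V), zValidList G B L ∧
    (∀ u w, ¬ zForceValid G (endBlue B L) u w) ∧ F = {p | p ∈ L}

/-- The set of blue vertices at time `t` when the forces of `F` are performed at the
earliest possible time steps, starting from `B` blue. -/
def zBlueAt (G : SimpleGraph V) (F : Set (V × V)) (B : Set V) : ℕ → Set V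
  | 0 => B
  | t + 1 =>
      zBlueAt G F B t ∪ {w | ∃ v, (v, w) ∈ F ∧ zForceValid G (zBlueAt G F B t) v w}

/-- The standard propagation time `pt_Z(G;F)` of a set of forces `F` of `B`. -/
noncomputable def ptZofF (G : SimpleGraph V) (F : Set (V × V)) (B : Set V) : ℕ∞ :=
  sInf {n : ℕ∞ | ∃ t : ℕ, n = t ∧ zBlueAt G F B t = Set.univ}

/-! ### `⌊Z⌋` (minor monotone floor) forcing -/

/-- Validity of a single `⌊Z⌋` force `u → w`: `u` is blue and has not yet forced, `w`
is white, and either `w` is the unique white neighbor of `u`, or all neighbors of `u`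
are blue (a hop). -/
def zfForceValid (G : SimpleGraph V) (blue forced : Set V) (u w : V) : Prop :=
  u ∈ blue ∧ w ∉ blue ∧ u ∉ forced ∧
    ((G.Adj u w ∧ ∀ x, G.Adj u x → x ∉ blue → x = w) ∨ ∀ x, G.Adj u x → x ∈ blue)

/-- Validity of a chronological list of `⌊Z⌋` forces. -/
def zfValidList (G : SimpleGraph V) : Set V → Set V → List (V × V) → Prop
  | _, _, [] => True
  | blue, forced, p :: L =>
      zfForceValid G blue forced p.1 p.2 ∧
        zfValidList G (insert p.2 blue) (insert p.1 forced) L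

/-- `F` is a set of `⌊Z⌋` forces of `B` in `G` (recorded from a maximal chronological
list of `⌊Z⌋` forces starting with `B` blue). -/
def IsZFForceSet (G : SimpleGraph V) (B : Set V) (F : Set (V × V)) : Prop :=
  ∃ L : List (V × V), zfValidList G B ∅ L ∧
    (∀ u w, ¬ zfForceValid G (endBlue B L) (endForced L) u w) ∧ F = {p | p ∈ L}

/-- The set of blue vertices at time `t` when the `⌊Z⌋` forces of `F` are performed at
the earliest possible time steps, starting from `B` blue. -/
def zfBlueAt (G : SimpleGraph V) (F : Set (V × V)) (B : Set V) : ℕ → Set V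
  | 0 => B
  | t + 1 =>
      zfBlueAt G F B t ∪
        {w | ∃ v, (v, w) ∈ F ∧ v ∈ zfBlueAt G F B t ∧ w ∉ zfBlueAt G F B t ∧
          (∀ w', (v, w') ∈ F → w' ∈ zfBlueAt G F B t → w' ∈ B) ∧
          ((G.Adj v w ∧ ∀ x, G.Adj v x → x ∉ zfBlueAt G F B t → x = w) ∨
            ∀ x, G.Adj v x → x ∈ zfBlueAt G F B t)}

/-- The `⌊Z⌋` propagation time `pt_⌊Z⌋(G;F)` of a set of `⌊Z⌋` forces `F` of `B`. -/
noncomputable def ptZFofF (G : SimpleGraph V) (F : Set (V × V)) (B : Set V) : ℕ∞ :=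
  sInf {n : ℕ∞ | ∃ t : ℕ, n = t ∧ zfBlueAt G F B t = Set.univ}

/-- The `⌊Z⌋` propagation time `pt_⌊Z⌋(G;B)`, minimized over sets of `⌊Z⌋` forces of `B`. -/
noncomputable def ptZF (G : SimpleGraph V) (B : Set V) : ℕ∞ :=
  sInf {n : ℕ∞ | ∃ F : Set (V × V), IsZFForceSet G B F ∧ n = ptZFofF G F B}

/-- The `⌊Z⌋` throttling number `th_⌊Z⌋(G;B) = |B| + pt_⌊Z⌋(G;B)`. -/
noncomputable def thZF (G : SimpleGraph V) (B : Set V) : ℕ∞ :=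
  (B.ncard : ℕ∞) + ptZF G B

/-- The `⌊Z⌋` throttling number `th_⌊Z⌋(G)`, minimized over all `B ⊆ V(G)`. -/
noncomputable def thZFgraph (G : SimpleGraph V) : ℕ∞ :=
  sInf {n : ℕ∞ | ∃ B : Set V, n = thZF G B}

/-- `B` is a `⌊Z⌋` forcing set of `G`. -/
def IsZFForcingSet (G : SimpleGraph V) (B : Set V) : Prop :=
  ∃ F : Set (V × V), IsZFForceSet G B F ∧ B ∪ {w | ∃ u, (u, w) ∈ F} = Set.univ

/-- The `⌊Z⌋` forcing number `⌊Z⌋(G)`. -/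
noncomputable def ZFnum (G : SimpleGraph V) : ℕ :=
  sInf {k : ℕ | ∃ B : Set V, IsZFForcingSet G B ∧ B.ncard = k}

/-- The `⌊Z⌋` propagation time `pt_⌊Z⌋(G)`, minimized over minimum `⌊Z⌋` forcing sets. -/
noncomputable def ptZFgraph (G : SimpleGraph V) : ℕ∞ :=
  sInf {n : ℕ∞ | ∃ B : Set V, IsZFForcingSet G B ∧ B.ncard = ZFnum G ∧ n = ptZF G B}

/-! ### Contractions, minors, and products -/

/-- The graph obtained from `H` by contracting (all) the edges in `C`: its vertices are
the connected components of the spanning subgraph of `H` with edge set `C ∩ E(H)`, and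
two distinct components are adjacent iff `H` has an edge between them. -/
def contractEdges (H : SimpleGraph α) (C : Set (Sym2 α)) :
    SimpleGraph (SimpleGraph.fromEdgeSet C ⊓ H).ConnectedComponent where
  Adj c d := c ≠ d ∧ ∃ a b, H.Adj a b ∧
      (SimpleGraph.fromEdgeSet C ⊓ H).connectedComponentMk a = c ∧
      (SimpleGraph.fromEdgeSet C ⊓ H).connectedComponentMk b = d
  symm := by
    constructor
    rintro c d ⟨hcd, a, b, hab, ha, hb⟩
    exact ⟨hcd.symm, b, a, hab.symm, hb, ha⟩
  loopless := ⟨fun c h => h.1 rfl⟩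

/-- `G` is a minor of `H`: `G` is isomorphic to a subgraph of a graph obtained from an
induced subgraph of `H` by contracting a set of edges. -/
def IsMinor (G : SimpleGraph β) (H : SimpleGraph α) : Prop :=
  ∃ (s : Set α) (C : Set (Sym2 s))
    (G'' : SimpleGraph (SimpleGraph.fromEdgeSet C ⊓ H.induce s).ConnectedComponent),
      G'' ≤ contractEdges (H.induce s) C ∧ Nonempty (G ≃g G'')

/-- The Cartesian product `K_a □ P_{b+1}`. -/
def prodKP (a b : ℕ) : SimpleGraph (Fin a × Fin (b + 1)) :=
  (⊤ : SimpleGraph (Fin a)) □ SimpleGraph.pathGraph (b + 1)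

/-- The path edges of `K_a □ P_{b+1}` (edges within the copies of `P_{b+1}`). -/
def pathEdges (a b : ℕ) : Set (Sym2 (Fin a × Fin (b + 1))) :=
  {e | ∃ (i : Fin a) (j j' : Fin (b + 1)),
    (SimpleGraph.pathGraph (b + 1)).Adj j j' ∧ e = s((i, j), (i, j'))}

/-- The complete edges of `K_a □ P_{b+1}` (edges within the copies of `K_a`). -/
def completeEdges (a b : ℕ) : Set (Sym2 (Fin a × Fin (b + 1))) :=
  {e | ∃ (i i' : Fin a) (j : Fin (b + 1)), i ≠ i' ∧ e = s((i, j), (i', j))}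

/-- The star `K_{1,n-1}` on `n` vertices: vertex `0` is adjacent to all others. -/
def starGraph (n : ℕ) : SimpleGraph (Fin n) where
  Adj i j := i ≠ j ∧ ((i : ℕ) = 0 ∨ (j : ℕ) = 0)
  symm := by constructor; rintro i j ⟨h1, h2⟩; exact ⟨h1.symm, h2.symm⟩
  loopless := ⟨fun i h => h.1 rfl⟩

/-- The independence number `α(G)`. -/
noncomputable def indepNum (G : SimpleGraph V) : ℕ :=
  sSup {k : ℕ | ∃ s : Set V, (∀ a ∈ s, ∀ b ∈ s, a ≠ b → ¬ G.Adj a b) ∧ s.ncard = k}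



-- ### Part A: list invariants and counting

lemma zfValidList_inv {G : SimpleGraph V} :
    ∀ (L : List (V × V)) (blue forced : Set V), zfValidList G blue forced L →
      (∀ p ∈ L, p.2 ∉ blue ∧ p.1 ∉ forced) ∧
      L.Pairwise (fun p q => p.1 ≠ q.1 ∧ p.2 ≠ q.2)
  | [], _, _, _ => ⟨by simp, List.Pairwise.nil⟩
  | p :: L, blue, forced, h => by
    obtain ⟨⟨h1, h2, h3, _⟩, hL⟩ := h
    obtain ⟨ih1, ih2⟩ := zfValidList_inv L _ _ hL
    refine ⟨?_, ?_⟩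
    · rintro q hq
      rcases List.mem_cons.1 hq with rfl | hq
      · exact ⟨h2, h3⟩
      · obtain ⟨a, b⟩ := ih1 q hq
        exact ⟨fun hc => a (Set.mem_insert_of_mem _ hc),
               fun hc => b (Set.mem_insert_of_mem _ hc)⟩
    · refine List.Pairwise.cons (fun q hq => ?_) ih2
      obtain ⟨a, b⟩ := ih1 q hq
      constructor
      · intro hc; exact b (hc ▸ Set.mem_insert _ _)
      · intro hc; exact a (hc ▸ Set.mem_insert _ _)

lemma pairwise_ne_of_nodup {L : List (V × V)}
    (h : L.Pairwise (fun p q : V × V => p.1 ≠ q.1 ∧ p.2 ≠ q.2)) :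
    (∀ p ∈ L, ∀ q ∈ L, p.1 = q.1 → p = q) ∧
    (∀ p ∈ L, ∀ q ∈ L, p.2 = q.2 → p = q) := by
  have hsymm : Symmetric (fun p q : V × V => p.1 ≠ q.1 ∧ p.2 ≠ q.2) := by
    intro p q ⟨a, b⟩; exact ⟨a.symm, b.symm⟩
  haveI : Std.Symm (fun p q : V × V => p.1 ≠ q.1 ∧ p.2 ≠ q.2) := ⟨hsymm⟩
  have hall := h.forall
  constructor
  · intro p hp q hq he
    by_contra hne
    exact (hall hp hq hne).1 he
  · intro p hp q hq he
    by_contra hne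
    exact (hall hp hq hne).2 he

lemma forceSet_props {G : SimpleGraph V} {B : Set V} {F : Set (V × V)}
    (h : IsZFForceSet G B F) :
    (∀ p ∈ F, ∀ q ∈ F, p.1 = q.1 → p = q) ∧
    (∀ p ∈ F, ∀ q ∈ F, p.2 = q.2 → p = q) := by
  obtain ⟨L, hL, -, rfl⟩ := h
  exact pairwise_ne_of_nodup (zfValidList_inv L B ∅ hL).2

lemma zfBlueAt_subset_succ (G : SimpleGraph V) (F : Set (V × V)) (B : Set V) (t : ℕ) :
    zfBlueAt G F B t ⊆ zfBlueAt G F B (t + 1) :=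
  Set.subset_union_left

lemma zfBlueAt_mono (G : SimpleGraph V) (F : Set (V × V)) (B : Set V) {s t : ℕ}
    (h : s ≤ t) : zfBlueAt G F B s ⊆ zfBlueAt G F B t := by
  induction t with
  | zero => simp [Nat.le_zero.1 h]
  | succ t ih =>
    rcases Nat.le_succ_iff.1 h with h' | rfl
    · exact (ih h').trans (zfBlueAt_subset_succ G F B t)
    · exact subset_rfl

lemma subset_zfBlueAt (G : SimpleGraph V) (F : Set (V × V)) (B : Set V) (t : ℕ) :
    B ⊆ zfBlueAt G F B t := zfBlueAt_mono G F B (Nat.zero_le t)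

lemma zfBlueAt_prov (G : SimpleGraph V) (F : Set (V × V)) (B : Set V) (t : ℕ) :
    ∀ x ∈ zfBlueAt G F B t, x ∉ B → ∃ v, (v, x) ∈ F ∧ v ∈ zfBlueAt G F B t := by
  induction t with
  | zero => intro x hx hxB; exact absurd hx hxB
  | succ t ih =>
    rintro x (hx | ⟨v, hvF, hv, -⟩) hxB
    · obtain ⟨v, h1, h2⟩ := ih x hx hxB
      exact ⟨v, h1, zfBlueAt_subset_succ G F B t h2⟩
    · exact ⟨v, hvF, zfBlueAt_subset_succ G F B t hv⟩

lemma zfBlueAt_card [Finite V] (G : SimpleGraph V) (F : Set (V × V)) (B : Set V)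
    (hfun : ∀ p ∈ F, ∀ q ∈ F, p.1 = q.1 → p = q)
    (hinj : ∀ p ∈ F, ∀ q ∈ F, p.2 = q.2 → p = q) (t : ℕ) :
    (zfBlueAt G F B t).ncard ≤ B.ncard * (t + 1) := by
  induction t with
  | zero => simp [zfBlueAt]
  | succ t ih =>
    classical
    set X := zfBlueAt G F B t with hX
    set N := {w | ∃ v, (v, w) ∈ F ∧ v ∈ X ∧ w ∉ X ∧
          (∀ w', (v, w') ∈ F → w' ∈ X → w' ∈ B) ∧
          ((G.Adj v w ∧ ∀ x, G.Adj v x → x ∉ X → x = w) ∨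
            ∀ x, G.Adj v x → x ∈ X)} with hN
    have hstep : zfBlueAt G F B (t + 1) = X ∪ N := rfl
    set Used := {v : V | ∃ w, (v, w) ∈ F ∧ w ∈ X ∧ w ∉ B} with hU
    -- the forcer function
    set f : V → V := fun w => if h : ∃ v, (v, w) ∈ F then h.choose else w with hf
    have hfspec : ∀ w, (∃ v, (v, w) ∈ F) → (f w, w) ∈ F := by
      intro w h
      simp only [hf, dif_pos h]
      exact h.choose_spec
    have hfeq : ∀ v w, (v, w) ∈ F → f w = v := by
      intro v w hvw
      have := hfspec w ⟨v, hvw⟩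
      have := hinj _ this _ hvw rfl
      exact (Prod.ext_iff.1 this).1
    -- Step A : |N \ X| ≤ |X \ Used|
    have hA : (N \ X).ncard ≤ (X \ Used).ncard := by
      apply Set.ncard_le_ncard_of_injOn f
      · rintro w ⟨⟨v, hvF, hvX, hwX, hcl, -⟩, -⟩
        have hfw : f w = v := hfeq v w hvF
        rw [hfw]
        refine ⟨hvX, ?_⟩
        rintro ⟨w', hw'F, hw'X, hw'B⟩
        have := hfun _ hvF _ hw'F rfl
        have : w = w' := (Prod.ext_iff.1 this).2
        exact hwX (this ▸ hw'X)
      · rintro w1 ⟨⟨v1, hv1, -⟩, -⟩ w2 ⟨⟨v2, hv2, -⟩, -⟩ he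
        have h1 : f w1 = v1 := hfeq v1 w1 hv1
        have h2 : f w2 = v2 := hfeq v2 w2 hv2
        have : (v1, w1) = (v2, w2) := hfun _ hv1 _ hv2 (by rw [← h1, ← h2, he])
        exact (Prod.ext_iff.1 this).2
    -- Step B : |X \ B| ≤ |X ∩ Used|
    have hB : (X \ B).ncard ≤ (X ∩ Used).ncard := by
      apply Set.ncard_le_ncard_of_injOn f
      · rintro x ⟨hxX, hxB⟩
        obtain ⟨v, hvF, hvX⟩ := zfBlueAt_prov G F B t x hxX hxB
        have hfx : f x = v := hfeq v x hvF
        rw [hfx]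
        exact ⟨hvX, x, hvF, hxX, hxB⟩
      · rintro x1 ⟨hx1, hb1⟩ x2 ⟨hx2, hb2⟩ he
        obtain ⟨v1, hv1, -⟩ := zfBlueAt_prov G F B t x1 hx1 hb1
        obtain ⟨v2, hv2, -⟩ := zfBlueAt_prov G F B t x2 hx2 hb2
        have h1 : f x1 = v1 := hfeq v1 x1 hv1
        have h2 : f x2 = v2 := hfeq v2 x2 hv2
        have : (v1, x1) = (v2, x2) := hfun _ hv1 _ hv2 (by rw [← h1, ← h2, he])
        exact (Prod.ext_iff.1 this).2
    have e1 : (X ∩ Used).ncard + (X \ Used).ncard = X.ncard :=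
      Set.ncard_inter_add_ncard_diff_eq_ncard X Used (Set.toFinite _)
    have e2 : (X ∩ B).ncard + (X \ B).ncard = X.ncard :=
      Set.ncard_inter_add_ncard_diff_eq_ncard X B (Set.toFinite _)
    have e3 : (X ∩ B).ncard ≤ B.ncard :=
      Set.ncard_le_ncard Set.inter_subset_right (Set.toFinite _)
    have hNX : (N \ X).ncard ≤ B.ncard := by omega
    have hcard : (zfBlueAt G F B (t + 1)).ncard ≤ X.ncard + (N \ X).ncard := by
      rw [hstep, ← Set.union_diff_self]
      exact Set.ncard_union_le _ _
    have := ih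
    calc (zfBlueAt G F B (t + 1)).ncard ≤ X.ncard + (N \ X).ncard := hcard
      _ ≤ B.ncard * (t + 1) + B.ncard := by omega
      _ = B.ncard * (t + 1 + 1) := by ring


-- arithmetic lemmas
lemma arith_lower {n b t : ℕ} (h : n ≤ b * (t + 1)) :
    (⌈2 * Real.sqrt n - 1⌉).toNat ≤ b + t := by
  rw [Int.toNat_le]
  rw [Int.ceil_le]
  push_cast
  have hs : Real.sqrt n ≥ 0 := Real.sqrt_nonneg _
  have h4 : 4 * (n : ℝ) ≤ ((b : ℝ) + (t + 1)) ^ 2 := by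
    have hb : (n : ℝ) ≤ (b : ℝ) * (t + 1) := by exact_mod_cast h
    nlinarith [sq_nonneg ((b : ℝ) - (t + 1))]
  have h2 : 2 * Real.sqrt n ≤ (b : ℝ) + (t + 1) := by
    have hbt : (0 : ℝ) ≤ (b : ℝ) + (t + 1) := by positivity
    nlinarith [Real.sq_sqrt (by positivity : (0:ℝ) ≤ (n:ℝ)),
      Real.sqrt_nonneg (n : ℝ), sq_nonneg (2 * Real.sqrt n - ((b:ℝ) + (t+1)))]
  linarith

lemma arith_upper {n : ℕ} (hn : 3 ≤ n) :
    ∃ b t : ℕ, 2 ≤ b ∧ 1 ≤ t ∧ b + t = (⌈2 * Real.sqrt n - 1⌉).toNat ∧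
      b * t < n ∧ n ≤ b * (t + 1) := by
  set K := (⌈2 * Real.sqrt n - 1⌉).toNat with hK
  have hsqrt3 : (3:ℝ) ≤ n := by exact_mod_cast hn
  have hs32 : (3:ℝ)/2 < Real.sqrt n := by
    rw [show (3:ℝ)/2 = Real.sqrt ((3/2)^2) from (Real.sqrt_sq (by norm_num)).symm]
    apply Real.sqrt_lt_sqrt (by positivity)
    nlinarith
  have hceil3 : (3 : ℤ) ≤ ⌈2 * Real.sqrt n - 1⌉ := by
    have : (2:ℝ) < 2 * Real.sqrt n - 1 := by linarith
    have := Int.lt_ceil.2 (show ((2:ℤ):ℝ) < 2 * Real.sqrt n - 1 by exact_mod_cast this)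
    omega
  have hK3 : 3 ≤ K := by
    rw [hK]; omega
  have hKval : (2 * Real.sqrt n - 1) ≤ (K : ℝ) := by
    have h1 : (2 * Real.sqrt n - 1) ≤ (⌈2 * Real.sqrt n - 1⌉ : ℝ) := Int.le_ceil _
    have h2 : ((K : ℕ) : ℤ) = ⌈2 * Real.sqrt n - 1⌉ := by
      rw [hK]; exact Int.toNat_of_nonneg (by omega)
    have h3 : ((K : ℕ) : ℝ) = ((⌈2 * Real.sqrt n - 1⌉ : ℤ) : ℝ) := by exact_mod_cast h2
    linarith [h3 ▸ h1]
  set m := K + 1 with hm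
  have hmR : 2 * Real.sqrt n ≤ (m : ℝ) := by
    push_cast [hm]; linarith
  have hm2 : 4 * n ≤ m * m := by
    have : 4 * (n:ℝ) ≤ (m:ℝ) * m := by
      nlinarith [Real.sq_sqrt (by positivity : (0:ℝ) ≤ (n:ℝ)), Real.sqrt_nonneg (n:ℝ)]
    exact_mod_cast this
  refine ⟨m - m / 2, m / 2 - 1, by omega, by omega, by omega, ?_, ?_⟩
  · -- b * t < n : else K would not be the ceiling
    by_contra hcon
    push_neg at hcon
    have h := arith_lower (b := m - m/2) (t := m/2 - 2) (n := n) (by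
      have e : m / 2 - 2 + 1 = m / 2 - 1 := by omega
      rw [e]; exact hcon)
    omega
  · -- n ≤ b * (t+1)
    have e : m / 2 - 1 + 1 = m / 2 := by omega
    rw [e]
    obtain ⟨s, hs | hs⟩ := Nat.even_or_odd' m
    · have e1 : m - m / 2 = s := by omega
      have e2 : m / 2 = s := by omega
      rw [e1, e2]
      nlinarith
    · have e1 : m - m / 2 = s + 1 := by omega
      have e2 : m / 2 = s := by omega
      rw [e1, e2]
      nlinarith

lemma enat_le_add_sInf {k : ℕ} {c : ℕ∞} {S : Set ℕ∞}
    (h : ∀ x ∈ S, (k : ℕ∞) ≤ c + x) : (k : ℕ∞) ≤ c + sInf S := by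
  have h2 : (k : ℕ∞) - c ≤ sInf S := le_sInf (fun x hx => tsub_le_iff_left.2 (h x hx))
  calc (k : ℕ∞) ≤ c + ((k : ℕ∞) - c) := le_add_tsub
    _ ≤ c + sInf S := add_le_add le_rfl h2



section LowerBound
variable {V : Type*}

lemma le_thZF [Fintype V] (G : SimpleGraph V) (B : Set V) (k : ℕ)
    (hk : ∀ b t : ℕ, Fintype.card V ≤ b * (t + 1) → k ≤ b + t) :
    (k : ℕ∞) ≤ thZF G B := by
  unfold thZF ptZF
  apply enat_le_add_sInf
  rintro x ⟨F, hF, rfl⟩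
  unfold ptZFofF
  apply enat_le_add_sInf
  rintro y ⟨t, rfl, ht⟩
  obtain ⟨hfun, hinj⟩ := forceSet_props hF
  have hcard := zfBlueAt_card G F B hfun hinj t
  rw [ht, Set.ncard_univ, Nat.card_eq_fintype_card] at hcard
  have := hk B.ncard t hcard
  exact_mod_cast Nat.cast_le.2 this

lemma thZFgraph_lower [Fintype V] (G : SimpleGraph V) (k : ℕ)
    (hk : ∀ b t : ℕ, Fintype.card V ≤ b * (t + 1) → k ≤ b + t) :
    (k : ℕ∞) ≤ thZFgraph G := by
  apply le_sInf
  rintro x ⟨B, rfl⟩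
  exact le_thZF G B k hk

end LowerBound

section Schedule
variable {V : Type*}

/-- Auxiliary: blue set after performing all forces in a list. -/
def aBlue (blue : Set V) (M : List (V × V)) : Set V :=
  blue ∪ {w | ∃ p ∈ M, p.2 = w}

/-- Auxiliary: forced set after performing all forces in a list. -/
def aForced (forced : Set V) (M : List (V × V)) : Set V :=
  forced ∪ {u | ∃ p ∈ M, p.1 = u}

lemma aBlue_cons (blue : Set V) (p : V × V) (M : List (V × V)) :
    aBlue blue (p :: M) = aBlue (insert p.2 blue) M := by
  ext x
  simp only [aBlue, Set.mem_union, Set.mem_setOf_eq, List.mem_cons, Set.mem_insert_iff]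
  constructor
  · rintro (h | ⟨q, (rfl | hq), rfl⟩)
    · exact Or.inl (Or.inr h)
    · exact Or.inl (Or.inl rfl)
    · exact Or.inr ⟨q, hq, rfl⟩
  · rintro ((rfl | h) | ⟨q, hq, rfl⟩)
    · exact Or.inr ⟨p, Or.inl rfl, rfl⟩
    · exact Or.inl h
    · exact Or.inr ⟨q, Or.inr hq, rfl⟩

lemma aForced_cons (forced : Set V) (p : V × V) (M : List (V × V)) :
    aForced forced (p :: M) = aForced (insert p.1 forced) M := by
  ext x
  simp only [aForced, Set.mem_union, Set.mem_setOf_eq, List.mem_cons, Set.mem_insert_iff]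
  constructor
  · rintro (h | ⟨q, (rfl | hq), rfl⟩)
    · exact Or.inl (Or.inr h)
    · exact Or.inl (Or.inl rfl)
    · exact Or.inr ⟨q, hq, rfl⟩
  · rintro ((rfl | h) | ⟨q, hq, rfl⟩)
    · exact Or.inr ⟨p, Or.inl rfl, rfl⟩
    · exact Or.inl h
    · exact Or.inr ⟨q, Or.inr hq, rfl⟩

lemma aBlue_append (blue : Set V) (M1 M2 : List (V × V)) :
    aBlue blue (M1 ++ M2) = aBlue (aBlue blue M1) M2 := by
  ext x
  simp only [aBlue, Set.mem_union, Set.mem_setOf_eq, List.mem_append]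
  constructor
  · rintro (h | ⟨p, (h1 | h2), rfl⟩)
    · exact Or.inl (Or.inl h)
    · exact Or.inl (Or.inr ⟨p, h1, rfl⟩)
    · exact Or.inr ⟨p, h2, rfl⟩
  · rintro ((h | ⟨p, h1, rfl⟩) | ⟨p, h2, rfl⟩)
    · exact Or.inl h
    · exact Or.inr ⟨p, Or.inl h1, rfl⟩
    · exact Or.inr ⟨p, Or.inr h2, rfl⟩

lemma aForced_append (forced : Set V) (M1 M2 : List (V × V)) :
    aForced forced (M1 ++ M2) = aForced (aForced forced M1) M2 := by
  ext x
  simp only [aForced, Set.mem_union, Set.mem_setOf_eq, List.mem_append]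
  constructor
  · rintro (h | ⟨p, (h1 | h2), rfl⟩)
    · exact Or.inl (Or.inl h)
    · exact Or.inl (Or.inr ⟨p, h1, rfl⟩)
    · exact Or.inr ⟨p, h2, rfl⟩
  · rintro ((h | ⟨p, h1, rfl⟩) | ⟨p, h2, rfl⟩)
    · exact Or.inl h
    · exact Or.inr ⟨p, Or.inl h1, rfl⟩
    · exact Or.inr ⟨p, Or.inr h2, rfl⟩

lemma endBlue_eq_aBlue (B : Set V) (M : List (V × V)) : endBlue B M = aBlue B M := by
  ext x
  simp only [endBlue, aBlue, Set.mem_union, Set.mem_setOf_eq]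
  constructor
  · rintro (h | ⟨u, hu⟩)
    · exact Or.inl h
    · exact Or.inr ⟨(u, x), hu, rfl⟩
  · rintro (h | ⟨p, hp, rfl⟩)
    · exact Or.inl h
    · exact Or.inr ⟨p.1, hp⟩

lemma zfValidList_append {G : SimpleGraph V} :
    ∀ (M1 : List (V × V)) (M2 : List (V × V)) (blue forced : Set V),
      zfValidList G blue forced M1 →
      zfValidList G (aBlue blue M1) (aForced forced M1) M2 →
      zfValidList G blue forced (M1 ++ M2)
  | [], M2, blue, forced, _, h2 => by
    have e1 : aBlue blue [] = blue := by simp [aBlue]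
    have e2 : aForced forced [] = forced := by simp [aForced]
    rw [e1, e2] at h2
    simpa using h2
  | p :: M1, M2, blue, forced, h1, h2 => by
    refine ⟨h1.1, ?_⟩
    apply zfValidList_append M1 M2 _ _ h1.2
    rwa [aBlue_cons, aForced_cons] at h2

lemma zfValidList_of_step {G : SimpleGraph V} (S0 : Set V) :
    ∀ (M : List (V × V)) (blue forced : Set V), S0 ⊆ blue →
      (∀ p ∈ M, p.1 ∈ S0) →
      (∀ p ∈ M, p.2 ∉ blue) →
      (∀ p ∈ M, p.1 ∉ forced) →
      (M.map Prod.fst).Nodup → (M.map Prod.snd).Nodup →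
      (∀ p ∈ M, (G.Adj p.1 p.2 ∧ ∀ x, G.Adj p.1 x → x ∉ S0 → x = p.2) ∨
        (∀ x, G.Adj p.1 x → x ∈ S0)) →
      zfValidList G blue forced M
  | [], _, _, _, _, _, _, _, _, _ => trivial
  | p :: M, blue, forced, hS0, h1, h2, h3, h4, h5, h6 => by
    constructor
    · refine ⟨hS0 (h1 p (List.mem_cons_self)), h2 p (List.mem_cons_self),
        h3 p (List.mem_cons_self), ?_⟩
      rcases h6 p (List.mem_cons_self) with ⟨hadj, huniq⟩ | hhop
      · exact Or.inl ⟨hadj, fun x hx hxb => huniq x hx (fun hS => hxb (hS0 hS))⟩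
      · exact Or.inr (fun x hx => hS0 (hhop x hx))
    · apply zfValidList_of_step S0 M (insert p.2 blue) (insert p.1 forced)
      · exact hS0.trans (Set.subset_insert _ _)
      · exact fun q hq => h1 q (List.mem_cons_of_mem _ hq)
      · intro q hq
        rcases List.nodup_cons.1 h5 with ⟨hp2, -⟩
        intro hc
        rcases Set.mem_insert_iff.1 hc with he | hc2
        · exact hp2 (he ▸ List.mem_map_of_mem (f := Prod.snd) hq)
        · exact h2 q (List.mem_cons_of_mem _ hq) hc2
      · intro q hq
        rcases List.nodup_cons.1 h4 with ⟨hp1, -⟩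
        intro hc
        rcases Set.mem_insert_iff.1 hc with he | hc2
        · exact hp1 (he ▸ List.mem_map_of_mem (f := Prod.fst) hq)
        · exact h3 q (List.mem_cons_of_mem _ hq) hc2
      · exact (List.nodup_cons.1 h4).2
      · exact (List.nodup_cons.1 h5).2
      · exact fun q hq => h6 q (List.mem_cons_of_mem _ hq)

/-- The blue set after `j` rounds of a schedule. -/
def stepsBlue (B : Set V) (steps : ℕ → List (V × V)) : ℕ → Set V
  | 0 => B
  | j + 1 => aBlue (stepsBlue B steps j) (steps j)

lemma stepsBlue_mono (B : Set V) (steps : ℕ → List (V × V)) {i j : ℕ} (h : i ≤ j) :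
    stepsBlue B steps i ⊆ stepsBlue B steps j := by
  induction j with
  | zero => rw [Nat.le_zero.1 h]
  | succ j ih =>
    rcases Nat.le_succ_iff.1 h with h' | rfl
    · exact (ih h').trans Set.subset_union_left
    · exact subset_rfl

lemma aBlue_flatMap (B : Set V) (steps : ℕ → List (V × V)) (j : ℕ) :
    aBlue B ((List.range j).flatMap steps) = stepsBlue B steps j := by
  induction j with
  | zero => simp [aBlue, stepsBlue]
  | succ j ih =>
    rw [List.range_succ, List.flatMap_append, aBlue_append, ih]
    simp [stepsBlue, List.flatMap_singleton]

lemma schedule_lemma (G : SimpleGraph V) (B : Set V) (steps : ℕ → List (V × V)) (t : ℕ)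
    (hnodup1 : (((List.range t).flatMap steps).map Prod.fst).Nodup)
    (hnodup2 : (((List.range t).flatMap steps).map Prod.snd).Nodup)
    (hforcer : ∀ j, j < t → ∀ p ∈ steps j, p.1 ∈ stepsBlue B steps j)
    (htgt : ∀ j, j < t → ∀ p ∈ steps j, p.2 ∉ stepsBlue B steps j)
    (hcond : ∀ j, j < t → ∀ p ∈ steps j,
      (G.Adj p.1 p.2 ∧ ∀ x, G.Adj p.1 x → x ∉ stepsBlue B steps j → x = p.2) ∨
      (∀ x, G.Adj p.1 x → x ∈ stepsBlue B steps j))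
    (huniv : stepsBlue B steps t = Set.univ) :
    ptZF G B ≤ (t : ℕ∞) := by
  classical
  set L := (List.range t).flatMap steps with hL
  -- prefix property
  have hprefix : ∀ j, j ≤ t → ∃ R, L = (List.range j).flatMap steps ++ R := by
    intro j hj
    refine ⟨((List.range (t - j)).map (j + ·)).flatMap steps, ?_⟩
    rw [hL, ← List.flatMap_append, ← List.range_add, Nat.add_sub_cancel' hj]
  have hpre_nodup1 : ∀ j, j ≤ t → (((List.range j).flatMap steps).map Prod.fst).Nodup := by
    intro j hj
    obtain ⟨R, hR⟩ := hprefix j hj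
    rw [hR, List.map_append] at hnodup1
    exact (List.nodup_append.1 hnodup1).1
  have hpre_nodup2 : ∀ j, j ≤ t → (((List.range j).flatMap steps).map Prod.snd).Nodup := by
    intro j hj
    obtain ⟨R, hR⟩ := hprefix j hj
    rw [hR, List.map_append] at hnodup2
    exact (List.nodup_append.1 hnodup2).1
  -- validity
  have hvalid : ∀ j, j ≤ t → zfValidList G B ∅ ((List.range j).flatMap steps) := by
    intro j hj
    induction j with
    | zero => simp [zfValidList]
    | succ j ih =>
      have hjt : j < t := hj
      rw [List.range_succ, List.flatMap_append, List.flatMap_singleton]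
      apply zfValidList_append
      · exact ih (Nat.le_of_lt hjt)
      · rw [aBlue_flatMap]
        have hn1 := hpre_nodup1 (j+1) hj
        rw [List.range_succ, List.flatMap_append, List.flatMap_singleton,
          List.map_append, List.nodup_append] at hn1
        have hn2 := hpre_nodup2 (j+1) hj
        rw [List.range_succ, List.flatMap_append, List.flatMap_singleton,
          List.map_append, List.nodup_append] at hn2
        apply zfValidList_of_step (stepsBlue B steps j) (steps j) _ _ subset_rfl
        · exact hforcer j hjt
        · exact htgt j hjt
        · intro p hp hc
          rcases hc with hc | hc
          · exact hc
          · obtain ⟨q, hq, hq1⟩ := hc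
            exact hn1.2.2 _ (List.mem_map_of_mem (f := Prod.fst) hq) _ (List.mem_map_of_mem (f := Prod.fst) hp) hq1
        · exact hn1.2.1
        · exact hn2.2.1
        · exact hcond j hjt
  -- the force set
  set F : Set (V × V) := {p | p ∈ L} with hF
  have hendBlue : endBlue B L = Set.univ := by
    rw [endBlue_eq_aBlue, hL, aBlue_flatMap, huniv]
  have hforce : IsZFForceSet G B F := by
    refine ⟨L, hvalid t le_rfl, ?_, rfl⟩
    intro u w hval
    rw [hendBlue] at hval
    exact hval.2.1 (Set.mem_univ w)
  obtain ⟨hFfun, -⟩ := forceSet_props hforce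
  -- scheduled blue at time j contains stepsBlue j
  have hsub : ∀ j, j ≤ t → stepsBlue B steps j ⊆ zfBlueAt G F B j := by
    intro j hj
    induction j with
    | zero => exact subset_rfl
    | succ j ih =>
      have hjt : j < t := hj
      have ihj := ih (Nat.le_of_lt hjt)
      rintro v (hv | ⟨p, hp, rfl⟩)
      · exact zfBlueAt_subset_succ G F B j (ihj hv)
      · by_cases hvb : p.2 ∈ zfBlueAt G F B j
        · exact zfBlueAt_subset_succ G F B j hvb
        · refine Set.mem_union_right _ ⟨p.1, ?_, ihj (hforcer j hjt p hp), hvb, ?_, ?_⟩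
          · show (p.1, p.2) ∈ F
            rw [hF]
            show (p.1, p.2) ∈ L
            rw [hL]
            exact List.mem_flatMap.2 ⟨j, List.mem_range.2 hjt, by simpa using hp⟩
          · intro w' hw'F hw'b
            have hpF : p ∈ F := by
              rw [hF]; show p ∈ L; rw [hL]
              exact List.mem_flatMap.2 ⟨j, List.mem_range.2 hjt, hp⟩
            have : (p.1, w') = p := hFfun _ hw'F _ hpF rfl
            have : w' = p.2 := by rw [← this]
            exact absurd (this ▸ hw'b) hvb
          · rcases hcond j hjt p hp with ⟨hadj, huniq⟩ | hhop
            · exact Or.inl ⟨hadj, fun x hx hxn => huniq x hx (fun hS => hxn (ihj hS))⟩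
            · exact Or.inr (fun x hx => ihj (hhop x hx))
  have hunivt : zfBlueAt G F B t = Set.univ := by
    apply Set.eq_univ_of_univ_subset
    rw [← huniv]
    exact hsub t le_rfl
  -- conclude
  have h1 : ptZFofF G F B ≤ (t : ℕ∞) := sInf_le ⟨t, rfl, hunivt⟩
  have h2 : ptZF G B ≤ ptZFofF G F B := sInf_le ⟨F, hforce, rfl⟩
  exact h2.trans h1

end Schedule

/-! ### basic Fin-cycle helpers -/

def cyc (n : ℕ) (hn : 3 ≤ n) (k : ℕ) : Fin n := ⟨k % n, Nat.mod_lt _ (by omega)⟩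

lemma cyc_val {n : ℕ} (hn : 3 ≤ n) {k : ℕ} (hk : k < n) : (cyc n hn k).val = k :=
  Nat.mod_eq_of_lt hk

lemma cyc_eq_cyc {n : ℕ} (hn : 3 ≤ n) {k k' : ℕ} (h : k % n = k' % n) :
    cyc n hn k = cyc n hn k' := Fin.ext h

lemma cyc_eq_iff {n : ℕ} (hn : 3 ≤ n) {k : ℕ} (hk : k < n) {v : Fin n} :
    v = cyc n hn k ↔ v.val = k := by
  constructor
  · rintro rfl; exact cyc_val hn hk
  · intro h; exact Fin.ext (by rw [h]; exact (Nat.mod_eq_of_lt hk).symm)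

lemma mod_cases {n x : ℕ} (hn : 0 < n) (hx : x < 2 * n) :
    (x < n ∧ x % n = x) ∨ (n ≤ x ∧ x % n = x - n) := by
  rcases Nat.lt_or_ge x n with h | h
  · exact Or.inl ⟨h, Nat.mod_eq_of_lt h⟩
  · exact Or.inr ⟨h, by rw [Nat.mod_eq_sub_mod h, Nat.mod_eq_of_lt (by omega)]⟩

lemma cyc_adj {n : ℕ} (hn : 3 ≤ n) (k : ℕ) :
    (cycleGraph n).Adj (cyc n hn k) (cyc n hn (k + 1)) := by
  rw [cycleGraph_adj']
  right
  rw [Fin.sub_def]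
  show (n - (cyc n hn k).val + (cyc n hn (k+1)).val) % n = 1
  have h3 : (cyc n hn k).val = k % n := rfl
  have h2 : (cyc n hn (k+1)).val = (k % n + 1) % n := by
    show (k + 1) % n = (k % n + 1) % n
    conv_lhs => rw [Nat.add_mod, Nat.mod_eq_of_lt (show 1 < n by omega)]
  rw [h2, h3]
  have hr : k % n < n := Nat.mod_lt _ (by omega)
  by_cases hr1 : k % n = n - 1
  · rw [hr1]
    have e1 : n - 1 + 1 = n := by omega
    rw [e1, Nat.mod_self, Nat.add_zero]
    have e2 : n - (n - 1) = 1 := by omega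
    rw [e2, Nat.mod_eq_of_lt (by omega)]
  · have e1 : (k % n + 1) % n = k % n + 1 := Nat.mod_eq_of_lt (by omega)
    rw [e1]
    have e2 : n - k % n + (k % n + 1) = n + 1 := by omega
    rw [e2, Nat.add_mod_left, Nat.mod_eq_of_lt (by omega)]

lemma adj_val {n : ℕ} (hn : 3 ≤ n) {u x : Fin n} (h : (cycleGraph n).Adj u x) :
    x.val = (u.val + 1) % n ∨ u.val = (x.val + 1) % n := by
  rw [cycleGraph_adj'] at h
  have hu : u.val < n := u.isLt
  have hx : x.val < n := x.isLt
  have hn0 : 0 < n := by omega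
  rcases h with h | h
  · right
    rw [Fin.sub_def] at h
    have h' : (n - x.val + u.val) % n = 1 := h
    rcases mod_cases hn0 (show n - x.val + u.val < 2*n by omega) with ⟨h1, h2⟩ | ⟨h1, h2⟩ <;>
      rcases mod_cases hn0 (show x.val + 1 < 2*n by omega) with ⟨h3, h4⟩ | ⟨h3, h4⟩ <;> omega
  · left
    rw [Fin.sub_def] at h
    have h' : (n - u.val + x.val) % n = 1 := h
    rcases mod_cases hn0 (show n - u.val + x.val < 2*n by omega) with ⟨h1, h2⟩ | ⟨h1, h2⟩ <;>
      rcases mod_cases hn0 (show u.val + 1 < 2*n by omega) with ⟨h3, h4⟩ | ⟨h3, h4⟩ <;> omega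


/-! ### the construction -/

/-- Blue set at time `j` : the cyclic interval `[-j, b*(j+1)-j-1]`. -/
def SSet (n b j : ℕ) : Set (Fin n) :=
  {v | (v.val + j < n ∧ v.val + j < b * (j+1)) ∨ (n ≤ v.val + j ∧ v.val + j - n < b * (j+1))}

/-- value of the left forcer at step `j+1`. -/
def lfv (n j : ℕ) : ℕ := if j = 0 then 0 else n - j

/-- The forces performed at step `j+1`. -/
def cstep (n b : ℕ) (hn : 3 ≤ n) (j : ℕ) : List (Fin n × Fin n) :=
  (cyc n hn (lfv n j), cyc n hn (n - (j+1))) ::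
  ((cyc n hn (b*(j+1) - (j+1)), cyc n hn (b*(j+1) - j)) ::
    (List.range (min b (n - b*(j+1)) - 2)).map (fun i =>
      (cyc n hn (b*j - j + 1 + i), cyc n hn (b*(j+1) - j + 1 + i)))).take
        (min b (n - b*(j+1)) - 1)

lemma mem_cstep {n b : ℕ} (hn : 3 ≤ n) {j : ℕ} {p : Fin n × Fin n} :
    p ∈ cstep n b hn j ↔
      p = (cyc n hn (lfv n j), cyc n hn (n - (j+1))) ∨
      (2 ≤ min b (n - b*(j+1)) ∧
        p = (cyc n hn (b*(j+1) - (j+1)), cyc n hn (b*(j+1) - j))) ∨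
      (∃ i, i < min b (n - b*(j+1)) - 2 ∧
        p = (cyc n hn (b*j - j + 1 + i), cyc n hn (b*(j+1) - j + 1 + i))) := by
  set c := min b (n - b*(j+1)) with hc
  rcases Nat.lt_or_ge c 2 with h2 | h2
  · have e0 : c - 1 = 0 := by omega
    have e2 : c - 2 = 0 := by omega
    rw [cstep, ← hc, e0, e2]
    simp only [List.range_zero, List.map_nil, List.take_zero, List.mem_singleton]
    constructor
    · intro h; exact Or.inl h
    · rintro (h | ⟨hch, -⟩ | ⟨i, hi, -⟩)
      · exact h
      · omega
      · omega
  · have hlen : ((cyc n hn (b*(j+1) - (j+1)), cyc n hn (b*(j+1) - j)) ::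
        (List.range (c - 2)).map (fun i =>
          (cyc n hn (b*j - j + 1 + i), cyc n hn (b*(j+1) - j + 1 + i)))).length = c - 1 := by
      simp only [List.length_cons, List.length_map, List.length_range]
      omega
    rw [cstep, ← hc, List.take_of_length_le (le_of_eq hlen)]
    simp only [List.mem_cons, List.mem_map, List.mem_range]
    constructor
    · rintro (h | h | ⟨i, hi, rfl⟩)
      · exact Or.inl h
      · exact Or.inr (Or.inl ⟨h2, h⟩)
      · exact Or.inr (Or.inr ⟨i, hi, rfl⟩)
    · rintro (h | ⟨-, h⟩ | ⟨i, hi, rfl⟩)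
      · exact Or.inl h
      · exact Or.inr (Or.inl h)
      · exact Or.inr (Or.inr ⟨i, hi, rfl⟩)


lemma SS_step {n b t : ℕ} (hn : 3 ≤ n) (hb : 2 ≤ b) (ht : 1 ≤ t) (hbt : b*t < n)
    (hnb : n ≤ b*(t+1)) {j : ℕ} (hj : j < t) :
    aBlue (SSet n b j) (cstep n b hn j) = SSet n b (j+1) := by
  have e1 : b*(j+1) ≤ b*t := Nat.mul_le_mul_left b (by omega)
  have e2 : b*(j+1) = b*j + b := by ring
  have e3 : b*(j+2) = b*(j+1) + b := by ring
  have e3' : b*(j+1+1) = b*(j+1) + b := by ring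
  have e4 : b*(t+1) = b*t + b := by ring
  have e5 : 2*(j+1) ≤ b*(j+1) := Nat.mul_le_mul_right (j+1) hb
  have hc1 : min b (n - b*(j+1)) ≤ b := min_le_left _ _
  have hc2 : min b (n - b*(j+1)) ≤ n - b*(j+1) := min_le_right _ _
  have hc3 : min b (n - b*(j+1)) = b ∨ min b (n - b*(j+1)) = n - b*(j+1) :=
    min_choice _ _
  ext v
  have hv : v.val < n := v.isLt
  simp only [aBlue, Set.mem_union, SSet, Set.mem_setOf_eq]
  constructor
  · rintro (hblue | ⟨p, hp, rfl⟩)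
    · omega
    · rcases (mem_cstep hn).1 hp with rfl | ⟨hcg, rfl⟩ | ⟨i, hi, rfl⟩
      · dsimp only
        rw [cyc_val hn (show n - (j+1) < n by omega)]
        omega
      · dsimp only
        rw [cyc_val hn (show b*(j+1) - j < n by omega)]
        omega
      · dsimp only
        rw [cyc_val hn (show b*(j+1) - j + 1 + i < n by omega)]
        omega
  · intro h
    rcases Nat.lt_or_ge (v.val + j) n with hA | hB
    · rcases Nat.lt_or_ge (v.val + j) (b*(j+1)) with hq | hq
      · exact Or.inl (Or.inl ⟨hA, hq⟩)
      · right
        by_cases hn1 : v.val + j + 1 = n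
        · refine ⟨_, (mem_cstep hn).2 (Or.inl rfl), ?_⟩
          dsimp only
          exact ((cyc_eq_iff hn (show n - (j+1) < n by omega)).2 (by omega)).symm
        · by_cases he : v.val + j = b*(j+1)
          · refine ⟨_, (mem_cstep hn).2 (Or.inr (Or.inl ⟨by omega, rfl⟩)), ?_⟩
            dsimp only
            exact ((cyc_eq_iff hn (show b*(j+1) - j < n by omega)).2 (by omega)).symm
          · refine ⟨_, (mem_cstep hn).2 (Or.inr (Or.inr
              ⟨v.val + j - b*(j+1) - 1, by omega, rfl⟩)), ?_⟩
            dsimp only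
            exact ((cyc_eq_iff hn (show
              b*(j+1) - j + 1 + (v.val + j - b*(j+1) - 1) < n by omega)).2 (by omega)).symm
    · rcases Nat.lt_or_ge (v.val + j - n) (b*(j+1)) with hq | hq
      · exact Or.inl (Or.inr ⟨hB, hq⟩)
      · exfalso; omega


section Facts
variable {n b t : ℕ}

lemma lfv_lt {n j : ℕ} (hn : 3 ≤ n) (hj : j < n) : lfv n j < n := by
  unfold lfv; split <;> omega

lemma cstep_tgt (hn : 3 ≤ n) (hb : 2 ≤ b) (ht : 1 ≤ t) (hbt : b*t < n)
    (hnb : n ≤ b*(t+1)) {j : ℕ} (hj : j < t) :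
    ∀ p ∈ cstep n b hn j, p.2 ∉ SSet n b j := by
  have e1 : b*(j+1) ≤ b*t := Nat.mul_le_mul_left b (by omega)
  have e2 : b*(j+1) = b*j + b := by ring
  have e4 : b*(t+1) = b*t + b := by ring
  have e5 : 2*(j+1) ≤ b*(j+1) := Nat.mul_le_mul_right (j+1) hb
  have hc1 : min b (n - b*(j+1)) ≤ b := min_le_left _ _
  have hc2 : min b (n - b*(j+1)) ≤ n - b*(j+1) := min_le_right _ _
  intro p hp
  rcases (mem_cstep hn).1 hp with rfl | ⟨hcg, rfl⟩ | ⟨i, hi, rfl⟩ <;> dsimp only <;>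
    simp only [SSet, Set.mem_setOf_eq]
  · rw [cyc_val hn (show n - (j+1) < n by omega)]; omega
  · rw [cyc_val hn (show b*(j+1) - j < n by omega)]; omega
  · rw [cyc_val hn (show b*(j+1) - j + 1 + i < n by omega)]; omega

lemma cstep_forcer (hn : 3 ≤ n) (hb : 2 ≤ b) (ht : 1 ≤ t) (hbt : b*t < n)
    (hnb : n ≤ b*(t+1)) {j : ℕ} (hj : j < t) :
    ∀ p ∈ cstep n b hn j, p.1 ∈ SSet n b j := by
  have e1 : b*(j+1) ≤ b*t := Nat.mul_le_mul_left b (by omega)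
  have e2 : b*(j+1) = b*j + b := by ring
  have e4 : b*(t+1) = b*t + b := by ring
  have e5 : 2*(j+1) ≤ b*(j+1) := Nat.mul_le_mul_right (j+1) hb
  have e6 : 1*j ≤ b*j := Nat.mul_le_mul_right j (by omega)
  have hc1 : min b (n - b*(j+1)) ≤ b := min_le_left _ _
  have hc2 : min b (n - b*(j+1)) ≤ n - b*(j+1) := min_le_right _ _
  intro p hp
  rcases (mem_cstep hn).1 hp with rfl | ⟨hcg, rfl⟩ | ⟨i, hi, rfl⟩ <;> dsimp only <;>
    simp only [SSet, Set.mem_setOf_eq]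
  · rw [cyc_val hn (lfv_lt hn (by omega))]
    by_cases hj0 : j = 0 <;> simp only [lfv, hj0, if_true, if_false] <;> omega
  · rw [cyc_val hn (show b*(j+1) - (j+1) < n by omega)]; omega
  · rw [cyc_val hn (show b*j - j + 1 + i < n by omega)]; omega

lemma cstep_cond (hn : 3 ≤ n) (hb : 2 ≤ b) (ht : 1 ≤ t) (hbt : b*t < n)
    (hnb : n ≤ b*(t+1)) {j : ℕ} (hj : j < t) :
    ∀ p ∈ cstep n b hn j,
      ((cycleGraph n).Adj p.1 p.2 ∧
        ∀ x, (cycleGraph n).Adj p.1 x → x ∉ SSet n b j → x = p.2) ∨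
      (∀ x, (cycleGraph n).Adj p.1 x → x ∈ SSet n b j) := by
  have hn0 : 0 < n := by omega
  have e1 : b*(j+1) ≤ b*t := Nat.mul_le_mul_left b (by omega)
  have e2 : b*(j+1) = b*j + b := by ring
  have e4 : b*(t+1) = b*t + b := by ring
  have e5 : 2*(j+1) ≤ b*(j+1) := Nat.mul_le_mul_right (j+1) hb
  have e6 : 1*j ≤ b*j := Nat.mul_le_mul_right j (by omega)
  have hc1 : min b (n - b*(j+1)) ≤ b := min_le_left _ _
  have hc2 : min b (n - b*(j+1)) ≤ n - b*(j+1) := min_le_right _ _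
  intro p hp
  rcases (mem_cstep hn).1 hp with rfl | ⟨hcg, rfl⟩ | ⟨i, hi, rfl⟩ <;> dsimp only
  · -- left force
    left
    have hlv : (cyc n hn (lfv n j)).val = lfv n j := cyc_val hn (lfv_lt hn (by omega))
    have hlfv : (j = 0 ∧ lfv n j = 0) ∨ (j ≠ 0 ∧ lfv n j = n - j) := by
      unfold lfv; split <;> simp_all
    constructor
    · have hu : cyc n hn (lfv n j) = cyc n hn ((n - (j+1)) + 1) := by
        apply cyc_eq_cyc hn
        rcases hlfv with ⟨hj0, hl⟩ | ⟨hj0, hl⟩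
        · rw [hl, hj0, Nat.zero_mod, show n - (0+1) + 1 = n by omega, Nat.mod_self]
        · rw [hl, show n - (j+1) + 1 = n - j by omega]
      rw [hu]
      exact (cyc_adj hn _).symm
    · intro x hx hxS
      rcases adj_val hn hx with h | h
      · exfalso
        apply hxS
        simp only [SSet, Set.mem_setOf_eq]
        rw [hlv] at h
        rcases mod_cases hn0 (show lfv n j + 1 < 2*n by rcases hlfv with ⟨-, hl⟩ | ⟨-, hl⟩ <;> omega)
          with ⟨h3, h4⟩ | ⟨h3, h4⟩ <;> rcases hlfv with ⟨hj0, hl⟩ | ⟨hj0, hl⟩ <;> omega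
      · rw [hlv] at h
        apply (cyc_eq_iff hn (show n - (j+1) < n by omega)).2
        rcases mod_cases hn0 (show x.val + 1 < 2*n by omega)
          with ⟨h3, h4⟩ | ⟨h3, h4⟩ <;> rcases hlfv with ⟨hj0, hl⟩ | ⟨hj0, hl⟩ <;> omega
  · -- right force
    left
    have hrv : (cyc n hn (b*(j+1) - (j+1))).val = b*(j+1) - (j+1) :=
      cyc_val hn (by omega)
    constructor
    · have e : b*(j+1) - j = (b*(j+1) - (j+1)) + 1 := by omega
      rw [e]
      exact cyc_adj hn _
    · intro x hx hxS
      rcases adj_val hn hx with h | h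
      · rw [hrv] at h
        apply (cyc_eq_iff hn (show b*(j+1) - j < n by omega)).2
        rcases mod_cases hn0 (show b*(j+1) - (j+1) + 1 < 2*n by omega)
          with ⟨h3, h4⟩ | ⟨h3, h4⟩ <;> omega
      · exfalso
        apply hxS
        simp only [SSet, Set.mem_setOf_eq]
        rw [hrv] at h
        rcases mod_cases hn0 (show x.val + 1 < 2*n by omega)
          with ⟨h3, h4⟩ | ⟨h3, h4⟩ <;> omega
  · -- hop
    right
    intro x hx
    have hhv : (cyc n hn (b*j - j + 1 + i)).val = b*j - j + 1 + i := cyc_val hn (by omega)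
    simp only [SSet, Set.mem_setOf_eq]
    rcases adj_val hn hx with h | h <;> rw [hhv] at h
    · rcases mod_cases hn0 (show b*j - j + 1 + i + 1 < 2*n by omega)
        with ⟨h3, h4⟩ | ⟨h3, h4⟩ <;> omega
    · rcases mod_cases hn0 (show x.val + 1 < 2*n by omega)
        with ⟨h3, h4⟩ | ⟨h3, h4⟩ <;> omega


lemma cyc_inj {n : ℕ} (hn : 3 ≤ n) {k k' : ℕ} (hk : k < n) (hk' : k' < n) :
    cyc n hn k = cyc n hn k' ↔ k = k' := by
  constructor
  · intro h
    have h2 : (cyc n hn k).val = k' := by rw [h]; exact cyc_val hn hk'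
    rw [cyc_val hn hk] at h2
    exact h2
  · rintro rfl; rfl

lemma cstep_eq_small (hn : 3 ≤ n) {j : ℕ} (hc : min b (n - b*(j+1)) ≤ 1) :
    cstep n b hn j = [(cyc n hn (lfv n j), cyc n hn (n - (j+1)))] := by
  rw [cstep]
  have e : min b (n - b*(j+1)) - 1 = 0 := by omega
  rw [e, List.take_zero]

lemma cstep_eq_big (hn : 3 ≤ n) {j : ℕ} (hc : 2 ≤ min b (n - b*(j+1))) :
    cstep n b hn j = (cyc n hn (lfv n j), cyc n hn (n - (j+1))) ::
      (cyc n hn (b*(j+1) - (j+1)), cyc n hn (b*(j+1) - j)) ::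
      (List.range (min b (n - b*(j+1)) - 2)).map (fun i =>
        (cyc n hn (b*j - j + 1 + i), cyc n hn (b*(j+1) - j + 1 + i))) := by
  rw [cstep]
  congr 1
  apply List.take_of_length_le
  simp only [List.length_cons, List.length_map, List.length_range]
  omega

lemma cstep_snd_nodup (hn : 3 ≤ n) (hb : 2 ≤ b) (ht : 1 ≤ t) (hbt : b*t < n)
    (hnb : n ≤ b*(t+1)) {j : ℕ} (hj : j < t) :
    ((cstep n b hn j).map Prod.snd).Nodup := by
  have e1 : b*(j+1) ≤ b*t := Nat.mul_le_mul_left b (by omega)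
  have e2 : b*(j+1) = b*j + b := by ring
  have e4 : b*(t+1) = b*t + b := by ring
  have e5 : 2*(j+1) ≤ b*(j+1) := Nat.mul_le_mul_right (j+1) hb
  have hc1 : min b (n - b*(j+1)) ≤ b := min_le_left _ _
  have hc2 : min b (n - b*(j+1)) ≤ n - b*(j+1) := min_le_right _ _
  rcases Nat.lt_or_ge (min b (n - b*(j+1))) 2 with h2 | h2
  · rw [cstep_eq_small hn (by omega)]
    simp
  · rw [cstep_eq_big hn h2]
    simp only [List.map_cons, List.map_map, List.nodup_cons, List.mem_cons,
      List.mem_map, List.mem_range, Function.comp]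
    refine ⟨?_, ?_, ?_⟩
    · push_neg
      constructor
      · rw [Ne, cyc_inj hn (by omega) (by omega)]
        omega
      · intro i hi
        rw [Ne, cyc_inj hn (by omega) (by omega)]
        omega
    · push_neg
      intro i hi
      rw [Ne, cyc_inj hn (by omega) (by omega)]
      omega
    · apply List.Nodup.map_on ?_ (List.nodup_range)
      intro i hi i' hi' he
      rw [List.mem_range] at hi hi'
      simp only [Function.comp_apply] at he
      rw [cyc_inj hn (by omega) (by omega)] at he
      omega

lemma cstep_fst_nodup (hn : 3 ≤ n) (hb : 2 ≤ b) (ht : 1 ≤ t) (hbt : b*t < n)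
    (hnb : n ≤ b*(t+1)) {j : ℕ} (hj : j < t) :
    ((cstep n b hn j).map Prod.fst).Nodup := by
  have e1 : b*(j+1) ≤ b*t := Nat.mul_le_mul_left b (by omega)
  have e2 : b*(j+1) = b*j + b := by ring
  have e4 : b*(t+1) = b*t + b := by ring
  have e5 : 2*(j+1) ≤ b*(j+1) := Nat.mul_le_mul_right (j+1) hb
  have e6 : 1*j ≤ b*j := Nat.mul_le_mul_right j (by omega)
  have e7 : j ≤ t - 1
  · omega
  have e8 : b*j ≤ b*t := Nat.mul_le_mul_left b (by omega)
  have hc1 : min b (n - b*(j+1)) ≤ b := min_le_left _ _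
  have hc2 : min b (n - b*(j+1)) ≤ n - b*(j+1) := min_le_right _ _
  have hlfv : (j = 0 ∧ lfv n j = 0) ∨ (j ≠ 0 ∧ lfv n j = n - j) := by
    unfold lfv; split <;> simp_all
  rcases Nat.lt_or_ge (min b (n - b*(j+1))) 2 with h2 | h2
  · rw [cstep_eq_small hn (by omega)]
    simp
  · rw [cstep_eq_big hn h2]
    simp only [List.map_cons, List.map_map, List.nodup_cons, List.mem_cons,
      List.mem_map, List.mem_range, Function.comp]
    refine ⟨?_, ?_, ?_⟩
    · push_neg
      constructor
      · rw [Ne, cyc_inj hn (lfv_lt hn (by omega)) (by omega)]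
        rcases hlfv with ⟨hj0, hl⟩ | ⟨hj0, hl⟩ <;> omega
      · intro i hi
        rw [Ne, cyc_inj hn (by omega) (lfv_lt hn (by omega))]
        rcases hlfv with ⟨hj0, hl⟩ | ⟨hj0, hl⟩ <;> omega
    · push_neg
      intro i hi
      rw [Ne, cyc_inj hn (by omega) (by omega)]
      omega
    · apply List.Nodup.map_on ?_ (List.nodup_range)
      intro i hi i' hi' he
      rw [List.mem_range] at hi hi'
      simp only [Function.comp_apply] at he
      rw [cyc_inj hn (by omega) (by omega)] at he
      omega

lemma cstep_forcer_sub (hn : 3 ≤ n) (hb : 2 ≤ b) (ht : 1 ≤ t) (hbt : b*t < n)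
    (hnb : n ≤ b*(t+1)) {j : ℕ} (hj : j + 1 < t) :
    ∀ p ∈ cstep n b hn (j+1), ∃ q ∈ cstep n b hn j, q.2 = p.1 := by
  have e1 : b*(j+2) ≤ b*t := Nat.mul_le_mul_left b (by omega)
  have e2 : b*(j+1) = b*j + b := by ring
  have e3 : b*(j+2) = b*(j+1) + b := by ring
  have e3' : b*(j+1+1) = b*(j+1) + b := by ring
  have e4 : b*(t+1) = b*t + b := by ring
  have e5 : 2*(j+1) ≤ b*(j+1) := Nat.mul_le_mul_right (j+1) hb
  have e5' : 2*(j+2) ≤ b*(j+2) := Nat.mul_le_mul_right (j+2) hb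
  have hcfull : min b (n - b*(j+1)) = b := min_eq_left (by omega)
  have hc1' : min b (n - b*(j+1+1)) ≤ b := min_le_left _ _
  intro p hp
  rcases (mem_cstep hn).1 hp with rfl | ⟨hcg, rfl⟩ | ⟨i, hi, rfl⟩ <;> dsimp only
  · refine ⟨_, (mem_cstep hn).2 (Or.inl rfl), ?_⟩
    dsimp only
    have : lfv n (j+1) = n - (j+1) := by simp [lfv]
    rw [this]
  · rcases Nat.lt_or_ge b 3 with hb3 | hb3
    · refine ⟨_, (mem_cstep hn).2 (Or.inr (Or.inl ⟨by omega, rfl⟩)), ?_⟩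
      dsimp only
      apply congrArg
      have hb2 : b = 2 := by omega
      subst hb2
      omega
    · refine ⟨_, (mem_cstep hn).2 (Or.inr (Or.inr ⟨b - 3, by omega, rfl⟩)), ?_⟩
      dsimp only
      apply congrArg
      omega
  · rcases Nat.eq_zero_or_pos i with rfl | hi1
    · refine ⟨_, (mem_cstep hn).2 (Or.inr (Or.inl ⟨by omega, rfl⟩)), ?_⟩
      dsimp only
      apply congrArg
      omega
    · refine ⟨_, (mem_cstep hn).2 (Or.inr (Or.inr ⟨i - 1, by omega, rfl⟩)), ?_⟩
      dsimp only
      apply congrArg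
      omega

end Facts


section Assemble
variable {n b t : ℕ}

lemma SSet_zero (hn : 3 ≤ n) (hbn : b < n) : SSet n b 0 = {v : Fin n | v.val < b} := by
  ext v
  simp only [SSet, Set.mem_setOf_eq]
  have hv := v.isLt
  have e : b * (0 + 1) = b := by ring
  omega

lemma SSet_last (hn : 3 ≤ n) (hb : 2 ≤ b) (hbt : b*t < n) (hnb : n ≤ b*(t+1)) :
    SSet n b t = Set.univ := by
  ext v
  simp only [SSet, Set.mem_setOf_eq, Set.mem_univ, iff_true]
  have hv := v.isLt
  have e : 1*t ≤ b*t := Nat.mul_le_mul_right t (by omega)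
  omega

lemma stepsBlue_eq (hn : 3 ≤ n) (hb : 2 ≤ b) (ht : 1 ≤ t) (hbt : b*t < n)
    (hnb : n ≤ b*(t+1)) {j : ℕ} (hj : j ≤ t) :
    stepsBlue (SSet n b 0) (cstep n b hn) j = SSet n b j := by
  induction j with
  | zero => rfl
  | succ j ih =>
    have hjt : j < t := hj
    show aBlue (stepsBlue (SSet n b 0) (cstep n b hn) j) (cstep n b hn j) = _
    rw [ih (Nat.le_of_lt hjt), SS_step hn hb ht hbt hnb hjt]

lemma SSet_mono (hn : 3 ≤ n) (hb : 2 ≤ b) (ht : 1 ≤ t) (hbt : b*t < n)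
    (hnb : n ≤ b*(t+1)) {i j : ℕ} (hij : i ≤ j) (hj : j ≤ t) :
    SSet n b i ⊆ SSet n b j := by
  rw [← stepsBlue_eq hn hb ht hbt hnb (le_trans hij hj),
    ← stepsBlue_eq hn hb ht hbt hnb hj]
  exact stepsBlue_mono _ _ hij

lemma cstep_tgt_mem (hn : 3 ≤ n) (hb : 2 ≤ b) (ht : 1 ≤ t) (hbt : b*t < n)
    (hnb : n ≤ b*(t+1)) {j : ℕ} (hj : j < t) :
    ∀ p ∈ cstep n b hn j, p.2 ∈ SSet n b (j+1) := by
  intro p hp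
  rw [← SS_step hn hb ht hbt hnb hj]
  exact Set.mem_union_right _ ⟨p, hp, rfl⟩

lemma global_snd_nodup (hn : 3 ≤ n) (hb : 2 ≤ b) (ht : 1 ≤ t) (hbt : b*t < n)
    (hnb : n ≤ b*(t+1)) :
    (((List.range t).flatMap (cstep n b hn)).map Prod.snd).Nodup := by
  rw [List.map_flatMap, List.nodup_flatMap]
  constructor
  · intro j hj
    exact cstep_snd_nodup hn hb ht hbt hnb (List.mem_range.1 hj)
  · apply List.Pairwise.imp_of_mem ?_ (List.pairwise_lt_range (n := t))
    intro i j hi hj hij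
    rw [List.mem_range] at hi hj
    intro x hxi hxj
    obtain ⟨p, hp, rfl⟩ := List.mem_map.1 hxi
    obtain ⟨q, hq, he⟩ := List.mem_map.1 hxj
    have h1 : p.2 ∈ SSet n b (i+1) := cstep_tgt_mem hn hb ht hbt hnb hi p hp
    have h2 : p.2 ∈ SSet n b j :=
      SSet_mono hn hb ht hbt hnb (by omega) (by omega) h1
    rw [← he] at h2
    exact cstep_tgt hn hb ht hbt hnb hj q hq h2

lemma global_fst_nodup (hn : 3 ≤ n) (hb : 2 ≤ b) (ht : 1 ≤ t) (hbt : b*t < n)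
    (hnb : n ≤ b*(t+1)) :
    (((List.range t).flatMap (cstep n b hn)).map Prod.fst).Nodup := by
  rw [List.map_flatMap, List.nodup_flatMap]
  constructor
  · intro j hj
    exact cstep_fst_nodup hn hb ht hbt hnb (List.mem_range.1 hj)
  · apply List.Pairwise.imp_of_mem ?_ (List.pairwise_lt_range (n := t))
    intro i j hi hj hij
    rw [List.mem_range] at hi hj
    intro x hxi hxj
    obtain ⟨p, hp, hpe⟩ := List.mem_map.1 hxi
    obtain ⟨q, hq, hqe⟩ := List.mem_map.1 hxj
    obtain ⟨j', rfl⟩ : ∃ j', j = j' + 1 := ⟨j - 1, by omega⟩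
    obtain ⟨r, hr, hre⟩ := cstep_forcer_sub hn hb ht hbt hnb hj q hq
    have hrx : r.2 = x := by rw [hre, hqe]
    have hrnot : r.2 ∉ SSet n b j' := cstep_tgt hn hb ht hbt hnb (by omega) r hr
    apply hrnot
    rw [hrx]
    rcases Nat.eq_zero_or_pos i with rfl | hi1
    · have h1 : p.1 ∈ SSet n b 0 := cstep_forcer hn hb ht hbt hnb hi p hp
      rw [hpe] at h1
      exact SSet_mono hn hb ht hbt hnb (by omega) (by omega) h1
    · obtain ⟨i', rfl⟩ : ∃ i', i = i' + 1 := ⟨i - 1, by omega⟩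
      obtain ⟨u, hu, hue⟩ := cstep_forcer_sub hn hb ht hbt hnb hi p hp
      have h1 : u.2 ∈ SSet n b (i'+1) := cstep_tgt_mem hn hb ht hbt hnb (by omega) u hu
      have h2 : u.2 = x := by rw [hue, hpe]
      rw [h2] at h1
      exact SSet_mono hn hb ht hbt hnb (by omega) (by omega) h1

lemma SSet_zero_ncard (hn : 3 ≤ n) (hbn : b < n) : (SSet n b 0).ncard = b := by
  rw [SSet_zero hn hbn]
  have he : {v : Fin n | v.val < b} = (Fin.castLE (le_of_lt hbn)) '' Set.univ := by
    ext v
    simp only [Set.image_univ, Set.mem_range, Set.mem_setOf_eq]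
    constructor
    · intro h; exact ⟨⟨v.val, h⟩, Fin.ext rfl⟩
    · rintro ⟨i, rfl⟩; exact i.isLt
  rw [he, Set.ncard_image_of_injective _ (Fin.castLE_injective _), Set.ncard_univ,
    Nat.card_eq_fintype_card, Fintype.card_fin]

lemma cycle_upper (hn : 3 ≤ n) (hb : 2 ≤ b) (ht : 1 ≤ t) (hbt : b*t < n)
    (hnb : n ≤ b*(t+1)) :
    thZFgraph (SimpleGraph.cycleGraph n) ≤ ((b + t : ℕ) : ℕ∞) := by
  have hbn : b < n := by
    have e : b*1 ≤ b*t := Nat.mul_le_mul_left b ht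
    have e' : b*1 = b := by ring
    omega
  have hpt : ptZF (SimpleGraph.cycleGraph n) (SSet n b 0) ≤ (t : ℕ∞) := by
    apply schedule_lemma (SimpleGraph.cycleGraph n) (SSet n b 0) (cstep n b hn) t
    · exact global_fst_nodup hn hb ht hbt hnb
    · exact global_snd_nodup hn hb ht hbt hnb
    · intro j hj
      rw [stepsBlue_eq hn hb ht hbt hnb (Nat.le_of_lt hj)]
      exact cstep_forcer hn hb ht hbt hnb hj
    · intro j hj
      rw [stepsBlue_eq hn hb ht hbt hnb (Nat.le_of_lt hj)]
      exact cstep_tgt hn hb ht hbt hnb hj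
    · intro j hj
      rw [stepsBlue_eq hn hb ht hbt hnb (Nat.le_of_lt hj)]
      exact cstep_cond hn hb ht hbt hnb hj
    · rw [stepsBlue_eq hn hb ht hbt hnb le_rfl]
      exact SSet_last hn hb hbt hnb
  calc thZFgraph (SimpleGraph.cycleGraph n)
      ≤ thZF (SimpleGraph.cycleGraph n) (SSet n b 0) := sInf_le ⟨_, rfl⟩
    _ = ((SSet n b 0).ncard : ℕ∞) + ptZF (SimpleGraph.cycleGraph n) (SSet n b 0) := rfl
    _ ≤ (b : ℕ∞) + (t : ℕ∞) := by
        rw [SSet_zero_ncard hn hbn]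
        exact add_le_add le_rfl hpt
    _ = ((b + t : ℕ) : ℕ∞) := by push_cast; rfl

end Assemble

/-- `th_⌊Z⌋(C_n) = ⌈2√n − 1⌉` for all `n ≥ 3`. -/
theorem stmt7 (n : ℕ) (hn : 3 ≤ n) :
    thZFgraph (SimpleGraph.cycleGraph n) = ((⌈2 * Real.sqrt n - 1⌉).toNat : ℕ∞) := by
  apply le_antisymm
  · obtain ⟨b, t, hb, ht, hbtK, hbt, hnb⟩ := arith_upper hn
    calc thZFgraph (SimpleGraph.cycleGraph n) ≤ ((b + t : ℕ) : ℕ∞) :=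
          cycle_upper hn hb ht hbt hnb
      _ = ((⌈2 * Real.sqrt n - 1⌉).toNat : ℕ∞) := by rw [hbtK]
  · apply thZFgraph_lower
    intro b t hcard
    rw [Fintype.card_fin] at hcard
    exact arith_lower hcard

end ZFT
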